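/- The monoid SL₂(ℕ) of 2×2 matrices with nonnegative integer entries and determinant 1 is freely generated (as a monoid) by the matrices A = [[1,1],[0,1]] and B = [[1,0],[1,1]]; that is, every such matrix can be written uniquely as a finite product of copies of A and B. -/
import Mathlib


open Matrix

/-- The generator A = [[1,1],[0,1]]. -/
noncomputable def matA : Matrix (Fin 2) (Fin 2) ℤ := !![1, 1; 0, 1]

/-- The generator B = [[1,0],[1,1]]. -/
noncomputable def matB : Matrix (Fin 2) (Fin 2) ℤ := !![1, 0; 1, 1]

/-- Interpret a word over {A, B} (encoded as a list of Booleans, `true` ↦ A,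
`false` ↦ B) as a product of matrices. -/
noncomputable def wordProd (w : List Bool) : Matrix (Fin 2) (Fin 2) ℤ :=
  (w.map (fun b => if b then matA else matB)).prod

lemma wordProd_nil : wordProd [] = 1 := by simp [wordProd]

lemma wordProd_cons (b : Bool) (t : List Bool) :
    wordProd (b :: t) = (if b then matA else matB) * wordProd t := by
  simp [wordProd]

lemma wordProd_nonneg (w : List Bool) : ∀ i j, 0 ≤ wordProd w i j := by
  induction w with
  | nil =>
    intro i j
    rw [wordProd_nil]
    fin_cases i <;> fin_cases j <;> simp [Matrix.one_apply]
  | cons b t ih =>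
    intro i j
    rw [wordProd_cons, Matrix.mul_apply]
    apply Finset.sum_nonneg
    intro k _
    apply mul_nonneg _ (ih k j)
    cases b <;> fin_cases i <;> fin_cases k <;> simp [matA, matB]

lemma wordProd_det (w : List Bool) : (wordProd w).det = 1 := by
  induction w with
  | nil => simp [wordProd_nil]
  | cons b t ih =>
    rw [wordProd_cons, Matrix.det_mul, ih, mul_one]
    cases b <;> simp [matA, matB, Matrix.det_fin_two_of]

lemma exists_word : ∀ n : ℕ, ∀ M : Matrix (Fin 2) (Fin 2) ℤ,
    (∀ i j, 0 ≤ M i j) → M.det = 1 →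
    (M 0 0 + M 0 1 + M 1 0 + M 1 1).toNat ≤ n → ∃ w, wordProd w = M := by
  intro n
  induction n with
  | zero =>
    intro M hpos hdet hsum
    exfalso
    have h00 := hpos 0 0
    have h01 := hpos 0 1
    have h10 := hpos 1 0
    have h11 := hpos 1 1
    rw [Matrix.det_fin_two] at hdet
    have : M 0 0 = 0 ∧ M 0 1 = 0 ∧ M 1 0 = 0 ∧ M 1 1 = 0 := by omega
    rw [this.1, this.2.1] at hdet
    simp at hdet
  | succ n ih =>
    intro M hpos hdet hsum
    have h00 := hpos 0 0
    have h01 := hpos 0 1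
    have h10 := hpos 1 0
    have h11 := hpos 1 1
    have hdet2 : M 0 0 * M 1 1 - M 0 1 * M 1 0 = 1 := by
      rw [Matrix.det_fin_two] at hdet; exact hdet
    by_cases hI : M = 1
    · exact ⟨[], by rw [wordProd_nil, hI]⟩
    by_cases hA : M 1 0 ≤ M 0 0 ∧ M 1 1 ≤ M 0 1
    · -- peel off A
      set N : Matrix (Fin 2) (Fin 2) ℤ :=
        !![M 0 0 - M 1 0, M 0 1 - M 1 1; M 1 0, M 1 1] with hN
      have hNpos : ∀ i j, 0 ≤ N i j := by
        intro i j; fin_cases i <;> fin_cases j <;> simp [hN] <;> omega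
      have hNdet : N.det = 1 := by
        rw [hN, Matrix.det_fin_two_of]; ring_nf; linarith [hdet2]
      have hcd : 1 ≤ M 1 0 + M 1 1 := by
        by_contra h
        have : M 1 0 = 0 ∧ M 1 1 = 0 := by omega
        rw [this.1, this.2] at hdet2; simp at hdet2
      have hNsum : (N 0 0 + N 0 1 + N 1 0 + N 1 1).toNat ≤ n := by
        have e00 : N 0 0 = M 0 0 - M 1 0 := by simp [hN]
        have e01 : N 0 1 = M 0 1 - M 1 1 := by simp [hN]
        have e10 : N 1 0 = M 1 0 := by simp [hN]
        have e11 : N 1 1 = M 1 1 := by simp [hN]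
        rw [e00, e01, e10, e11]
        omega
      obtain ⟨t, ht⟩ := ih N hNpos hNdet hNsum
      refine ⟨true :: t, ?_⟩
      rw [wordProd_cons, if_pos rfl, ht]
      ext i j
      fin_cases i <;> fin_cases j <;>
        simp [hN, matA, Matrix.mul_apply, Fin.sum_univ_two] <;> ring
    by_cases hB : M 0 0 ≤ M 1 0 ∧ M 0 1 ≤ M 1 1
    · -- peel off B
      set N : Matrix (Fin 2) (Fin 2) ℤ :=
        !![M 0 0, M 0 1; M 1 0 - M 0 0, M 1 1 - M 0 1] with hN
      have hNpos : ∀ i j, 0 ≤ N i j := by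
        intro i j; fin_cases i <;> fin_cases j <;> simp [hN] <;> omega
      have hNdet : N.det = 1 := by
        rw [hN, Matrix.det_fin_two_of]; ring_nf; linarith [hdet2]
      have hab : 1 ≤ M 0 0 + M 0 1 := by
        by_contra h
        have : M 0 0 = 0 ∧ M 0 1 = 0 := by omega
        rw [this.1, this.2] at hdet2; simp at hdet2
      have hNsum : (N 0 0 + N 0 1 + N 1 0 + N 1 1).toNat ≤ n := by
        have e00 : N 0 0 = M 0 0 := by simp [hN]
        have e01 : N 0 1 = M 0 1 := by simp [hN]
        have e10 : N 1 0 = M 1 0 - M 0 0 := by simp [hN]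
        have e11 : N 1 1 = M 1 1 - M 0 1 := by simp [hN]
        rw [e00, e01, e10, e11]
        omega
      obtain ⟨t, ht⟩ := ih N hNpos hNdet hNsum
      refine ⟨false :: t, ?_⟩
      rw [wordProd_cons, if_neg (by simp), ht]
      ext i j
      fin_cases i <;> fin_cases j <;>
        simp [hN, matB, Matrix.mul_apply, Fin.sum_univ_two] <;> ring
    · exfalso
      push_neg at hA hB
      rcases le_or_gt (M 1 0) (M 0 0) with h1 | h1
      · have hbd : M 0 1 < M 1 1 := hA h1
        rcases le_or_gt (M 0 0) (M 1 0) with h2 | h2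
        · have := hB h2; omega
        · -- M 0 0 > M 1 0, M 0 1 < M 1 1 : forces M = 1
          have hkey : (M 1 0 + 1) * (M 0 1 + 1) ≤ M 0 0 * M 1 1 :=
            mul_le_mul (by omega) (by omega) (by omega) (by omega)
          have h3 : M 0 1 + M 1 0 ≤ 0 := by nlinarith [hkey, hdet2]
          obtain ⟨hb0, hc0⟩ : M 0 1 = 0 ∧ M 1 0 = 0 := by omega
          rw [hb0, hc0] at hdet2
          simp at hdet2
          have had : M 0 0 = 1 ∧ M 1 1 = 1 := by
            rcases Int.mul_eq_one_iff_eq_one_or_neg_one.mp hdet2 with ⟨ha, hd⟩ | ⟨ha, hd⟩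
            · exact ⟨ha, hd⟩
            · omega
          apply hI
          ext i j
          fin_cases i <;> fin_cases j <;>
            simp [had.1, had.2, hb0, hc0, Matrix.one_apply]
      · have hdb : M 1 1 < M 0 1 := hB h1.le
        have hkey : (M 0 0 + 1) * (M 1 1 + 1) ≤ M 1 0 * M 0 1 :=
          mul_le_mul (by omega) (by omega) (by omega) (by omega)
        nlinarith [hkey, hdet2]
lemma cancel_left (X P Q : Matrix (Fin 2) (Fin 2) ℤ)
    (hX : X = matA ∨ X = matB) (h : X * P = X * Q) : P = Q := by
  have hXdet : IsUnit X.det := by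
    rcases hX with h' | h' <;> rw [h'] <;>
      · simp [matA, matB, Matrix.det_fin_two_of]
  calc P = (X⁻¹ * X) * P := by rw [Matrix.nonsing_inv_mul X hXdet, one_mul]
    _ = X⁻¹ * (X * P) := by rw [Matrix.mul_assoc]
    _ = X⁻¹ * (X * Q) := by rw [h]
    _ = (X⁻¹ * X) * Q := by rw [Matrix.mul_assoc]
    _ = Q := by rw [Matrix.nonsing_inv_mul X hXdet, one_mul]

lemma word_inj : ∀ w w' : List Bool, wordProd w = wordProd w' → w = w' := by
  intro w
  induction w with
  | nil =>
    intro w' h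
    cases w' with
    | nil => rfl
    | cons b t =>
      exfalso
      rw [wordProd_nil, wordProd_cons] at h
      have hp01 := wordProd_nonneg t 0 1
      have hp10 := wordProd_nonneg t 1 0
      have hE : ∀ i j, (1 : Matrix (Fin 2) (Fin 2) ℤ) i j
          = ((if b then matA else matB) * wordProd t) i j := fun i j => by rw [h]
      cases b
      · -- B * P = 1 : entry (0,0): P00 = 1 ; (0,1): P01 = 0; (1,1): P01+P11=1 → P11=1; (1,0): P00+P10 = 0 → contradiction
        have e00 := hE 0 0
        have e10 := hE 1 0
        simp [matB, Matrix.mul_apply, Fin.sum_univ_two, Matrix.one_apply] at e00 e10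
        omega
      · have e11 := hE 1 1
        have e01 := hE 0 1
        simp [matA, Matrix.mul_apply, Fin.sum_univ_two, Matrix.one_apply] at e11 e01
        omega
  | cons b t ih =>
    intro w' h
    cases w' with
    | nil =>
      exfalso
      rw [wordProd_nil, wordProd_cons] at h
      have hp01 := wordProd_nonneg t 0 1
      have hp10 := wordProd_nonneg t 1 0
      have hE : ∀ i j, ((if b then matA else matB) * wordProd t) i j
          = (1 : Matrix (Fin 2) (Fin 2) ℤ) i j := fun i j => by rw [h]
      cases b
      · have e00 := hE 0 0
        have e10 := hE 1 0
        simp [matB, Matrix.mul_apply, Fin.sum_univ_two, Matrix.one_apply] at e00 e10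
        omega
      · have e11 := hE 1 1
        have e01 := hE 0 1
        simp [matA, Matrix.mul_apply, Fin.sum_univ_two, Matrix.one_apply] at e11 e01
        omega
    | cons b' t' =>
      rw [wordProd_cons, wordProd_cons] at h
      have hsame : b = b' := by
        by_contra hne
        have key : ∀ u u' : List Bool,
            matA * wordProd u = matB * wordProd u' → False := by
          intro u u' hh
          have hE : ∀ i j, (matA * wordProd u) i j = (matB * wordProd u') i j :=
            fun i j => by rw [hh]
          have e00 := hE 0 0
          have e01 := hE 0 1
          have e10 := hE 1 0
          have e11 := hE 1 1
          simp [matA, matB, Matrix.mul_apply, Fin.sum_univ_two] at e00 e01 e10 e11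
          have hq10 := wordProd_nonneg u' 1 0
          have hq11 := wordProd_nonneg u' 1 1
          have hp00 := wordProd_nonneg u 0 0
          have hp01 := wordProd_nonneg u 0 1
          have hu : wordProd u 0 0 = 0 ∧ wordProd u 0 1 = 0 := by omega
          have := wordProd_det u
          rw [Matrix.det_fin_two, hu.1, hu.2] at this
          simp at this
        cases b
        · cases b'
          · simp at hne
          · simp only [if_pos, if_neg, Bool.false_eq_true, ite_true, ite_false] at h
            exact key t' t h.symm
        · cases b'
          · simp only [Bool.false_eq_true, ite_true, ite_false] at h
            exact key t t' h
          · simp at hne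
      subst hsame
      have : wordProd t = wordProd t' := by
        apply cancel_left (if b then matA else matB) _ _ _ h
        cases b <;> simp
      rw [ih t' this]

/-- SL₂(ℕ) is freely generated as a monoid by A and B: every 2×2 matrix with
nonnegative integer entries and determinant 1 is the product of a unique finite
word in A and B. -/
theorem sl2_nat_free_monoid_on_A_B
    (M : Matrix (Fin 2) (Fin 2) ℤ)
    (hpos : ∀ i j, 0 ≤ M i j) (hdet : M.det = 1) :
    ∃! w : List Bool, wordProd w = M := by
  obtain ⟨w, hw⟩ := exists_word (M 0 0 + M 0 1 + M 1 0 + M 1 1).toNat M hpos hdet le_rfl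
  exact ⟨w, hw, fun w' hw' => word_inj w' w (hw'.trans hw.symm)⟩
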